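/- Let B be a linear operator on ℂ² all of whose eigenvalues w satisfy |w| ≥ 1. Then for every vector x ∈ ℂ², ‖Bx‖² + ‖B*x‖² ≥ ‖x‖². -/

import Mathlib

open Finset

open Complex Polynomial ComplexConjugate in
/-- Key scalar inequality for an upper triangular matrix `[[l, b], [0, d]]` whose
diagonal entries have modulus at least one. -/
lemma key15 (l b d y1 y2 : ℂ) (hl : 1 ≤ ‖l‖) (hd : 1 ≤ ‖d‖) :
    ‖y1‖^2 + ‖y2‖^2 ≤ (‖l*y1 + b*y2‖^2 + ‖d*y2‖^2) +
      (‖conj l * y1‖^2 + ‖conj b * y1 + conj d * y2‖^2) := by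
  have h1 : ‖l*y1 + b*y2‖^2
      = (‖l‖*‖y1‖)^2 + 2*(inner ℝ (l*y1) (b*y2) : ℝ) + (‖b‖*‖y2‖)^2 := by
    rw [norm_add_sq_real]; simp [norm_mul]
  have h2 : ‖(starRingEnd ℂ) b * y1 + (starRingEnd ℂ) d * y2‖^2
      = (‖b‖*‖y1‖)^2 + 2*(inner ℝ ((starRingEnd ℂ) b * y1) ((starRingEnd ℂ) d * y2) : ℝ)
        + (‖d‖*‖y2‖)^2 := by
    rw [norm_add_sq_real]; simp [norm_mul, RCLike.norm_conj]
  have h3 : ‖(starRingEnd ℂ) l * y1‖^2 = (‖l‖*‖y1‖)^2 := by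
    simp [norm_mul, RCLike.norm_conj]
  have h4 : ‖d*y2‖^2 = (‖d‖*‖y2‖)^2 := by simp [norm_mul]
  have i1 : |(inner ℝ (l*y1) (b*y2) : ℝ)| ≤ (‖l‖*‖y1‖)*(‖b‖*‖y2‖) := by
    simpa [norm_mul] using abs_real_inner_le_norm (l*y1) (b*y2)
  have i2 : |(inner ℝ ((starRingEnd ℂ) b * y1) ((starRingEnd ℂ) d * y2) : ℝ)|
      ≤ (‖b‖*‖y1‖)*(‖d‖*‖y2‖) := by
    simpa [norm_mul, RCLike.norm_conj] using
      abs_real_inner_le_norm ((starRingEnd ℂ) b * y1) ((starRingEnd ℂ) d * y2)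
  rw [h1, h2, h3, h4]
  have n1 := norm_nonneg y1; have n2 := norm_nonneg y2
  have hA : 1 ≤ ‖l‖^2 := by nlinarith [norm_nonneg l]
  have hD : 1 ≤ ‖d‖^2 := by nlinarith [norm_nonneg d]
  have e1 : -((‖l‖*‖y1‖)*(‖b‖*‖y2‖)) ≤ (inner ℝ (l*y1) (b*y2) : ℝ) := neg_le_of_abs_le i1
  have e2 : -((‖b‖*‖y1‖)*(‖d‖*‖y2‖))
      ≤ (inner ℝ ((starRingEnd ℂ) b * y1) ((starRingEnd ℂ) d * y2) : ℝ) := neg_le_of_abs_le i2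
  nlinarith [sq_nonneg (‖l‖*‖y1‖ - ‖b‖*‖y2‖), sq_nonneg (‖b‖*‖y1‖ - ‖d‖*‖y2‖),
    sq_nonneg ‖y1‖, sq_nonneg ‖y2‖, mul_nonneg (sq_nonneg ‖y1‖) (sub_nonneg.2 hA),
    mul_nonneg (sq_nonneg ‖y2‖) (sub_nonneg.2 hD)]

open Complex Polynomial ComplexConjugate in
/-- A vector transformation by a unitary `[[v1, -conj v2], [v2, conj v1]]` preserves
the sum of squared norms of the coordinates. -/
lemma unorm15 (v1 v2 z1 z2 : ℂ)
    (N : conj v1 * v1 + conj v2 * v2 = 1) :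
    ‖v1 * z1 - conj v2 * z2‖^2 + ‖v2 * z1 + conj v1 * z2‖^2 = ‖z1‖^2 + ‖z2‖^2 := by
  have e : ∀ z : ℂ, z * conj z = ((‖z‖^2 : ℝ) : ℂ) := fun z => by
    rw [Complex.mul_conj]; norm_cast
    rw [Complex.sq_norm]
  have h : (v1 * z1 - conj v2 * z2) * conj (v1 * z1 - conj v2 * z2)
      + (v2 * z1 + conj v1 * z2) * conj (v2 * z1 + conj v1 * z2)
      = z1 * conj z1 + z2 * conj z2 := by
    simp only [map_add, map_sub, map_mul, Complex.conj_conj]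
    linear_combination (z1 * conj z1 + z2 * conj z2) * N
  rw [e, e, e, e] at h
  exact_mod_cast h

open Complex Polynomial ComplexConjugate in
/-- The desired inequality for a `2 × 2` matrix `[[a, b], [c, d]]` with a unit
eigenvector `(v1, v2)` for eigenvalue `l`, assuming both eigenvalues have modulus
at least one. This is proved by explicit Schur triangularization with respect to the
unitary matrix `[[v1, -conj v2], [v2, conj v1]]`. -/
lemma red15 (a b c d l v1 v2 x1 x2 : ℂ)
    (E1 : a*v1 + b*v2 = l*v1) (E2 : c*v1 + d*v2 = l*v2)
    (N : conj v1 * v1 + conj v2 * v2 = 1)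
    (hl : 1 ≤ ‖l‖) (hd : 1 ≤ ‖a + d - l‖) :
    ‖x1‖^2 + ‖x2‖^2 ≤ (‖a*x1 + b*x2‖^2 + ‖c*x1 + d*x2‖^2) +
      (‖conj a * x1 + conj c * x2‖^2 + ‖conj b * x1 + conj d * x2‖^2) := by
  have F1 : conj a * conj v1 + conj b * conj v2 = conj l * conj v1 := by
    have := congrArg (starRingEnd ℂ) E1
    simp only [map_add, map_mul] at this; exact this
  have F2 : conj c * conj v1 + conj d * conj v2 = conj l * conj v2 := by
    have := congrArg (starRingEnd ℂ) E2
    simp only [map_add, map_mul] at this; exact this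
  set β : ℂ := -(a * (conj v1 * conj v2)) + b * (conj v1)^2 - c * (conj v2)^2
      + d * (conj v1 * conj v2) with hβ
  set δ : ℂ := a + d - l with hδ
  set y1 : ℂ := conj v1 * x1 + conj v2 * x2 with hy1
  set y2 : ℂ := -(v2 * x1) + v1 * x2 with hy2
  have H1 : x1 = v1 * y1 - conj v2 * y2 := by
    rw [hy1, hy2]; linear_combination (-x1) * N
  have H2 : x2 = v2 * y1 + conj v1 * y2 := by
    rw [hy1, hy2]; linear_combination (-x2) * N
  have hC : -(a * conj v2) + b * conj v1 = β * v1 - δ * conj v2 := by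
    rw [hβ, hδ]
    linear_combination (conj v1 * conj v2) * E1 + (conj v2)^2 * E2
      + (l * conj v2 - b * conj v1 - d * conj v2) * N
  have hD : -(c * conj v2) + d * conj v1 = β * v2 + δ * conj v1 := by
    rw [hβ, hδ]
    linear_combination (-(conj v1)^2) * E1 + (-(conj v1 * conj v2)) * E2
      + (a * conj v1 - l * conj v1 + c * conj v2) * N
  have hC1s : conj a * v1 + conj c * v2 = conj l * v1 - conj β * conj v2 := by
    rw [hβ]
    simp only [map_add, map_sub, map_neg, map_mul, map_pow, Complex.conj_conj]
    linear_combination v1^2 * F1 + (v1*v2) * F2 + (conj l * v1 - conj a * v1 - conj c * v2) * N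
  have hC2s : conj b * v1 + conj d * v2 = conj l * v2 + conj β * conj v1 := by
    rw [hβ]
    simp only [map_add, map_sub, map_neg, map_mul, map_pow, Complex.conj_conj]
    linear_combination (v1*v2) * F1 + v2^2 * F2 + (conj l * v2 - conj b * v1 - conj d * v2) * N
  have hC3s : -(conj a * conj v2) + conj c * conj v1 = -(conj δ * conj v2) := by
    rw [hδ]
    simp only [map_add, map_sub]
    linear_combination F2
  have hC4s : -(conj b * conj v2) + conj d * conj v1 = conj δ * conj v1 := by
    rw [hδ]
    simp only [map_add, map_sub]
    linear_combination -F1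
  have P1 : a*x1 + b*x2 = v1 * (l*y1 + β*y2) - conj v2 * (δ*y2) := by
    linear_combination a*H1 + b*H2 + y1*E1 + y2*hC
  have P2 : c*x1 + d*x2 = v2 * (l*y1 + β*y2) + conj v1 * (δ*y2) := by
    linear_combination c*H1 + d*H2 + y1*E2 + y2*hD
  have P3 : conj a * x1 + conj c * x2
      = v1 * (conj l * y1) - conj v2 * (conj β * y1 + conj δ * y2) := by
    linear_combination conj a * H1 + conj c * H2 + y1 * hC1s + y2 * hC3s
  have P4 : conj b * x1 + conj d * x2
      = v2 * (conj l * y1) + conj v1 * (conj β * y1 + conj δ * y2) := by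
    linear_combination conj b * H1 + conj d * H2 + y1 * hC2s + y2 * hC4s
  have U0 : ‖y1‖^2 + ‖y2‖^2 = ‖x1‖^2 + ‖x2‖^2 := by
    have h := unorm15 (conj v1) (-v2) x1 x2
      (by simp only [map_neg, Complex.conj_conj]; linear_combination N)
    simp only [map_neg, Complex.conj_conj] at h
    rw [hy1, hy2]
    convert h using 3 <;> ring_nf
  calc ‖x1‖^2 + ‖x2‖^2 = ‖y1‖^2 + ‖y2‖^2 := U0.symm
    _ ≤ (‖l*y1 + β*y2‖^2 + ‖δ*y2‖^2)
        + (‖conj l * y1‖^2 + ‖conj β * y1 + conj δ * y2‖^2) := key15 l β δ y1 y2 hl hd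
    _ = (‖a*x1 + b*x2‖^2 + ‖c*x1 + d*x2‖^2) +
      (‖conj a * x1 + conj c * x2‖^2 + ‖conj b * x1 + conj d * x2‖^2) := by
      rw [P1, P2, P3, P4, unorm15 v1 v2 _ _ N, unorm15 v1 v2 _ _ N]

open Complex Polynomial ComplexConjugate in
/-- If all eigenvalues `w` of an operator `B` on `ℂ²` satisfy `|w| ≥ 1`,
then `‖Bx‖² + ‖B*x‖² ≥ ‖x‖²` for all `x`. -/
theorem stmt_15 (B : Matrix (Fin 2) (Fin 2) ℂ)
    (hB : ∀ μ : ℂ, (Matrix.charpoly B).IsRoot μ → 1 ≤ ‖μ‖) :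
    ∀ x : Fin 2 → ℂ,
      ∑ i, ‖x i‖ ^ 2 ≤
        (∑ i, ‖B.mulVec x i‖ ^ 2) + ∑ i, ‖B.conjTranspose.mulVec x i‖ ^ 2 := by
  intro x
  have hcp : B.charpoly = X^2 - C (B 0 0 + B 1 1) * X
      + C (B 0 0 * B 1 1 - B 0 1 * B 1 0) := by
    rw [Matrix.charpoly, Matrix.det_fin_two]
    simp only [Matrix.charmatrix_apply_eq,
      Matrix.charmatrix_apply_ne _ _ _ (by decide : (0 : Fin 2) ≠ 1),
      Matrix.charmatrix_apply_ne _ _ _ (by decide : (1 : Fin 2) ≠ 0), map_add, map_sub, map_mul]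
    ring
  obtain ⟨l, hroot⟩ : ∃ z, B.charpoly.IsRoot z := by
    apply Complex.exists_root
    rw [Matrix.charpoly_degree_eq_dim]
    simp
  have hl1 : 1 ≤ ‖l‖ := hB l hroot
  have hchar : l^2 - (B 0 0 + B 1 1)*l + (B 0 0 * B 1 1 - B 0 1 * B 1 0) = 0 := by
    have h := hroot
    rw [hcp] at h
    simpa [Polynomial.IsRoot] using h
  have hδ1 : 1 ≤ ‖B 0 0 + B 1 1 - l‖ := by
    apply hB
    rw [hcp]
    simp only [Polynomial.IsRoot, eval_add, eval_sub, eval_mul, eval_pow, eval_X, eval_C]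
    linear_combination hchar
  simp only [Fin.sum_univ_two, Matrix.mulVec, dotProduct, Matrix.conjTranspose_apply]
  by_cases hcase : B 0 1 = 0 ∧ l = B 0 0
  · obtain ⟨h01, hla⟩ := hcase
    have h11 : 1 ≤ ‖B 1 1‖ := by
      have e : B 0 0 + B 1 1 - l = B 1 1 := by rw [hla]; ring
      rwa [e] at hδ1
    have h00 : 1 ≤ ‖B 0 0 + B 1 1 - B 1 1‖ := by
      have e : B 0 0 + B 1 1 - B 1 1 = B 0 0 := by ring
      rw [e, ← hla]; exact hl1
    exact red15 (B 0 0) (B 0 1) (B 1 0) (B 1 1) (B 1 1) 0 1 (x 0) (x 1)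
      (by simp [h01]) (by simp) (by simp) h11 h00
  · have hnz : Complex.normSq (B 0 1) + Complex.normSq (l - B 0 0) ≠ 0 := by
      intro h
      have h1 : Complex.normSq (B 0 1) = 0 ∧ Complex.normSq (l - B 0 0) = 0 := by
        constructor <;>
          nlinarith [Complex.normSq_nonneg (B 0 1), Complex.normSq_nonneg (l - B 0 0)]
      exact hcase ⟨Complex.normSq_eq_zero.1 h1.1, sub_eq_zero.1 (Complex.normSq_eq_zero.1 h1.2)⟩
    have hpos : 0 < Complex.normSq (B 0 1) + Complex.normSq (l - B 0 0) :=
      lt_of_le_of_ne (add_nonneg (Complex.normSq_nonneg _) (Complex.normSq_nonneg _)) (Ne.symm hnz)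
    set nn : ℝ := Real.sqrt (Complex.normSq (B 0 1) + Complex.normSq (l - B 0 0)) with hnn
    have hnpos : 0 < nn := Real.sqrt_pos.2 hpos
    have hnc : (nn : ℂ) ≠ 0 := by exact_mod_cast hnpos.ne'
    have hnsq : nn * nn = Complex.normSq (B 0 1) + Complex.normSq (l - B 0 0) :=
      Real.mul_self_sqrt hpos.le
    set v1 : ℂ := B 0 1 / nn with hv1
    set v2 : ℂ := (l - B 0 0) / nn with hv2
    have E1 : B 0 0 * v1 + B 0 1 * v2 = l * v1 := by
      rw [hv1, hv2, ← mul_div_assoc, ← mul_div_assoc, ← mul_div_assoc, ← add_div]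
      congr 1
      ring
    have E2 : B 1 0 * v1 + B 1 1 * v2 = l * v2 := by
      rw [hv1, hv2, ← mul_div_assoc, ← mul_div_assoc, ← mul_div_assoc, ← add_div]
      congr 1
      linear_combination -hchar
    have N : conj v1 * v1 + conj v2 * v2 = 1 := by
      rw [hv1, hv2]
      simp only [map_div₀, Complex.conj_ofReal]
      rw [div_mul_div_comm, div_mul_div_comm, ← add_div]
      rw [div_eq_one_iff_eq (by exact mul_ne_zero hnc hnc)]
      rw [← Complex.normSq_eq_conj_mul_self, ← Complex.normSq_eq_conj_mul_self]
      rw [show ((nn:ℂ) * (nn:ℂ)) = ((nn*nn : ℝ) : ℂ) by push_cast; ring, hnsq]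
      push_cast
      ring
    exact red15 (B 0 0) (B 0 1) (B 1 0) (B 1 1) l v1 v2 (x 0) (x 1) E1 E2 N hl1 hδ1
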